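/- arXiv:1001.1862 — 2 statements merged into one kernel-verified Lean document; each statement's English description precedes it below -/
import Mathlib

section
/- If A is a self-localized ring, then A/J(A) is a simple ring. -/
universe u

/-- A nonzero ring `A` is self-localized if every ring homomorphism from `A` to a nonzero
ring is a local homomorphism (the preimage of the units equals the units). -/
def SelfLocalized (A : Type u) [Ring A] : Prop :=
  ∀ (B : Type u) [Ring B], Nontrivial B →
    ∀ φ : A →+* B, φ ⁻¹' {b | IsUnit b} = {a : A | IsUnit a}

/-- Every proper two-sided ideal of a self-localized ring is contained in the Jacobson
radical. -/
lemma le_jacobson_of_selfLocalized {A : Type u} [Ring A] (h : SelfLocalized A)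
    (I : TwoSidedIdeal A) (hI : I ≠ ⊤) :
    I ≤ TwoSidedIdeal.jacobson (⊥ : TwoSidedIdeal A) := by
  intro x hx
  have hnt : Nontrivial I.ringCon.Quotient := by
    refine ⟨⟨(0 : A), (1 : A), fun h01 => hI ?_⟩⟩
    have h10 : I.ringCon 1 0 := (RingCon.eq _).1 h01.symm
    exact I.eq_top ((TwoSidedIdeal.mem_iff _ _).2 h10)
  have hloc := h I.ringCon.Quotient hnt I.ringCon.mk'
  rw [TwoSidedIdeal.mem_jacobson_iff]
  intro y
  have hmem : I.ringCon.mk' (1 + y * x) ∈ {b : I.ringCon.Quotient | IsUnit b} := by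
    have : I.ringCon (1 + y * x) 1 := by
      rw [TwoSidedIdeal.rel_iff]
      simpa using I.mul_mem_left y x hx
    have heq : I.ringCon.mk' (1 + y * x) = I.ringCon.mk' 1 := (RingCon.eq _).2 this
    rw [heq, map_one]
    exact isUnit_one
  have hunit : IsUnit (1 + y * x) := by
    have h' : (1 + y * x) ∈ (⇑I.ringCon.mk' ⁻¹' {b : I.ringCon.Quotient | IsUnit b}) := hmem
    rw [hloc] at h'
    exact h'
  obtain ⟨u, hu⟩ := hunit
  refine ⟨(↑u⁻¹ : A), ?_⟩
  rw [TwoSidedIdeal.mem_bot]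
  have hinv : (↑u⁻¹ : A) * (1 + y * x) = 1 := by rw [← hu]; exact u.inv_mul
  calc (↑u⁻¹ : A) * y * x + ↑u⁻¹ - 1
      = (↑u⁻¹ : A) * (1 + y * x) - 1 := by noncomm_ring
    _ = 0 := by rw [hinv, sub_self]

/-- If `A` is a self-localized ring, then `A / J(A)` is a simple ring, where `J(A)` is the
Jacobson radical of `A`. -/
theorem quotient_jacobson_simple_of_selfLocalized (A : Type u) [Ring A] [Nontrivial A]
    (h : SelfLocalized A) :
    IsSimpleRing (TwoSidedIdeal.jacobson (⊥ : TwoSidedIdeal A)).ringCon.Quotient := by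
  set J := TwoSidedIdeal.jacobson (⊥ : TwoSidedIdeal A) with hJdef
  -- J is a proper ideal
  have hJtop : J ≠ ⊤ := by
    intro htop
    have h1 : (1 : A) ∈ J := htop ▸ trivial
    rw [hJdef, TwoSidedIdeal.mem_jacobson_iff] at h1
    obtain ⟨z, hz⟩ := h1 (-1)
    rw [TwoSidedIdeal.mem_bot] at hz
    simp only [mul_neg_one, mul_one, neg_add_cancel, zero_sub, neg_eq_zero] at hz
    exact one_ne_zero hz
  have hntQ : Nontrivial J.ringCon.Quotient := by
    refine ⟨⟨(0 : A), (1 : A), fun h01 => hJtop ?_⟩⟩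
    have h10 : J.ringCon 1 0 := (RingCon.eq _).1 h01.symm
    exact J.eq_top ((TwoSidedIdeal.mem_iff _ _).2 h10)
  haveI : Nontrivial (TwoSidedIdeal J.ringCon.Quotient) :=
    ⟨⟨⊥, ⊤, fun hbt => by
      have h1 : (1 : J.ringCon.Quotient) ∈ (⊥ : TwoSidedIdeal J.ringCon.Quotient) :=
        hbt ▸ trivial
      rw [TwoSidedIdeal.mem_bot] at h1
      exact one_ne_zero (α := J.ringCon.Quotient) h1⟩⟩
  refine ⟨⟨fun K => ?_⟩⟩
  · by_cases hK : K = ⊤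
    · exact Or.inr hK
    · left
      have hcomap : K.comap J.ringCon.mk' ≠ ⊤ := by
        intro htop
        apply hK
        apply K.eq_top
        have h1 : (1 : A) ∈ K.comap J.ringCon.mk' := htop ▸ trivial
        rw [TwoSidedIdeal.mem_comap] at h1
        rwa [map_one] at h1
      have hle : K.comap J.ringCon.mk' ≤ J := le_jacobson_of_selfLocalized h _ hcomap
      ext x
      simp only [TwoSidedIdeal.mem_bot]
      constructor
      · intro hxK
        obtain ⟨a, rfl⟩ := Quot.exists_rep x
        have ha : a ∈ K.comap J.ringCon.mk' := by
          rw [TwoSidedIdeal.mem_comap]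
          exact hxK
        have haJ : a ∈ J := hle ha
        have : J.ringCon a 0 := (TwoSidedIdeal.mem_iff _ _).1 haJ
        exact ((RingCon.eq _).2 this).trans (J.ringCon.coe_zero)
      · intro hx
        rw [hx]
        exact K.zero_mem
end

section
/- A von Neumann regular ring is self-localized if and only if it is a simple ring. -/
universe u

/-- A von Neumann regular ring is self-localized iff it is a simple ring. -/
theorem vonNeumannRegular_selfLocalized_iff_simple (A : Type u) [Ring A] [Nontrivial A]
    (hvn : ∀ a : A, ∃ x : A, a * x * a = a) :
    SelfLocalized A ↔ IsSimpleRing A := by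
  constructor
  · intro hsl
    refine IsSimpleRing.of_eq_bot_or_eq_top fun I => ?_
    by_cases htop : I = ⊤
    · exact Or.inr htop
    · left
      have hnt : Nontrivial I.ringCon.Quotient := by
        refine ⟨1, 0, fun h => ?_⟩
        have : I.ringCon 1 0 := I.ringCon.eq.mp h
        exact htop (I.one_mem_iff.mp ((I.mem_iff 1).mpr this))
      have key := hsl I.ringCon.Quotient hnt I.ringCon.mk'
      refine le_antisymm (fun a ha => ?_) bot_le
      -- suppose a ∈ I; show a = 0
      obtain ⟨x, hx⟩ := hvn a
      have he : x * a ∈ I := I.mul_mem_left x a ha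
      have hφ : I.ringCon.mk' (1 - x * a) = 1 := by
        have h0 : I.ringCon.mk' (x * a) = I.ringCon.mk' 0 :=
          I.ringCon.eq.mpr ((I.mem_iff _).mp he)
        simp only [map_sub, map_one, h0, map_zero, sub_zero]
      have hmem : (1 - x * a) ∈ I.ringCon.mk' ⁻¹' {b | IsUnit b} := by
        show IsUnit (I.ringCon.mk' (1 - x * a))
        rw [hφ]; exact isUnit_one
      rw [key] at hmem
      have hu : IsUnit (1 - x * a) := hmem
      have ha0 : a * (1 - x * a) = 0 := by
        rw [mul_sub, mul_one, ← mul_assoc, hx, sub_self]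
      obtain ⟨u, hu'⟩ := hu
      rw [← hu'] at ha0
      have : a = 0 := by
        have := congrArg (· * (↑u⁻¹ : A)) ha0
        simpa using this
      simp [this]
  · intro hs
    intro B _ hB φ
    have hinj : Function.Injective φ := φ.injective
    ext a
    simp only [Set.mem_preimage, Set.mem_setOf_eq]
    constructor
    · intro hu
      obtain ⟨x, hx⟩ := hvn a
      obtain ⟨u, hu'⟩ := hu
      have h1 : (u : B) * φ x * u = u := by
        rw [hu']; simpa using congrArg φ hx
      have hxa : φ (x * a) = 1 := by
        have h := congrArg (fun b => (↑u⁻¹ : B) * b) h1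
        simp only [← mul_assoc, Units.inv_mul, one_mul] at h
        rw [map_mul, ← hu']
        exact h
      have hax : φ (a * x) = 1 := by
        have h := congrArg (fun b => b * (↑u⁻¹ : B)) h1
        simp only [mul_assoc, Units.mul_inv, mul_one] at h
        rw [map_mul, ← hu']
        exact h
      have h2 : x * a = 1 := hinj (by simpa using hxa)
      have h3 : a * x = 1 := hinj (by simpa using hax)
      exact isUnit_iff_exists.mpr ⟨x, h3, h2⟩
    · intro hu
      exact hu.map φ
end
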